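/- Suppose P^{i−1}(0,0) ≠ π(0) and P^i(0,0) ≠ π(0). Then μ_i P = q_i π + (1−q_i) μ_{i+1}. Moreover, if in addition P^t(0,0) is nonincreasing in t and P^i(0,0) > π(0), then q_i ∈ [0,1). -/
import Mathlib


open Matrix

/-- The row vector `μ_i = ( 0 | [P^{i−1}(0,0) π_{−0} − π(0) P^{i−1}(0,:)_{−0}] /
(P^{i−1}(0,0) − π(0)) )`. -/
noncomputable def muRow {n : ℕ} (P : Matrix (Fin (n + 1)) (Fin (n + 1)) ℝ)
    (π : Fin (n + 1) → ℝ) (i : ℕ) : Fin (n + 1) → ℝ := fun j =>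
  if j = 0 then 0
  else ((P ^ (i - 1)) 0 0 * π j - π 0 * (P ^ (i - 1)) 0 j) / ((P ^ (i - 1)) 0 0 - π 0)

/-- The scalar `q_i = (P^{i−1}(0,0) − P^{i}(0,0)) / (P^{i−1}(0,0) − π(0))`. -/
noncomputable def qScal {n : ℕ} (P : Matrix (Fin (n + 1)) (Fin (n + 1)) ℝ)
    (π : Fin (n + 1) → ℝ) (i : ℕ) : ℝ :=
  ((P ^ (i - 1)) 0 0 - (P ^ i) 0 0) / ((P ^ (i - 1)) 0 0 - π 0)

lemma muRow_eq {n : ℕ} (P : Matrix (Fin (n + 1)) (Fin (n + 1)) ℝ)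
    (π : Fin (n + 1) → ℝ) (i : ℕ) (j : Fin (n + 1)) :
    muRow P π i j =
      ((P ^ (i - 1)) 0 0 * π j - π 0 * (P ^ (i - 1)) 0 j) / ((P ^ (i - 1)) 0 0 - π 0) := by
  unfold muRow
  split
  · rename_i h
    subst h
    rw [mul_comm, sub_self, zero_div]
  · rfl

theorem stmt16 {n : ℕ} (hn : 1 ≤ n)
    (P : Matrix (Fin (n + 1)) (Fin (n + 1)) ℝ)
    (hP_nonneg : ∀ i j, 0 ≤ P i j) (hP_row : ∀ i, ∑ j, P i j = 1)
    (hprim : ∃ t : ℕ, ∀ i j, 0 < (P ^ t) i j)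
    (π : Fin (n + 1) → ℝ) (hπ_nonneg : ∀ i, 0 ≤ π i) (hπ_sum : ∑ i, π i = 1)
    (hπ_stat : π ᵥ* P = π)
    (i : ℕ) (hi : 1 ≤ i)
    (h1 : (P ^ (i - 1)) 0 0 ≠ π 0) (h2 : (P ^ i) 0 0 ≠ π 0) :
    (muRow P π i ᵥ* P = qScal P π i • π + (1 - qScal P π i) • muRow P π (i + 1)) ∧
    ((∀ t : ℕ, (P ^ (t + 1)) 0 0 ≤ (P ^ t) 0 0) → π 0 < (P ^ i) 0 0 →
      0 ≤ qScal P π i ∧ qScal P π i < 1) := by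
  have hsub : i - 1 + 1 = i := Nat.sub_add_cancel hi
  have ha0 : (P ^ (i - 1)) 0 0 - π 0 ≠ 0 := sub_ne_zero.mpr h1
  have hb0 : (P ^ i) 0 0 - π 0 ≠ 0 := sub_ne_zero.mpr h2
  have hPi : ∀ j, (P ^ i) 0 j = ∑ k, (P ^ (i - 1)) 0 k * P k j := by
    intro j
    conv_lhs => rw [← hsub]
    rw [pow_succ, Matrix.mul_apply]
  have hπP : ∀ j, ∑ k, π k * P k j = π j := by
    intro j
    have := congrFun hπ_stat j
    simpa [Matrix.vecMul, dotProduct] using this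
  constructor
  · funext j
    have hL : (muRow P π i ᵥ* P) j =
        ((P ^ (i - 1)) 0 0 * π j - π 0 * (P ^ i) 0 j) / ((P ^ (i - 1)) 0 0 - π 0) := by
      have step : ∀ k, muRow P π i k * P k j =
          ((P ^ (i - 1)) 0 0 * (π k * P k j) -
            π 0 * ((P ^ (i - 1)) 0 k * P k j)) / ((P ^ (i - 1)) 0 0 - π 0) := by
        intro k
        rw [muRow_eq, div_mul_eq_mul_div]
        congr 1
        ring
      calc (muRow P π i ᵥ* P) j = ∑ k, muRow P π i k * P k j := by
            simp [Matrix.vecMul, dotProduct]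
        _ = ∑ k, ((P ^ (i - 1)) 0 0 * (π k * P k j) -
              π 0 * ((P ^ (i - 1)) 0 k * P k j)) / ((P ^ (i - 1)) 0 0 - π 0) := by
            exact Finset.sum_congr rfl fun k _ => step k
        _ = (∑ k, ((P ^ (i - 1)) 0 0 * (π k * P k j) -
              π 0 * ((P ^ (i - 1)) 0 k * P k j))) / ((P ^ (i - 1)) 0 0 - π 0) := by
            rw [Finset.sum_div]
        _ = ((P ^ (i - 1)) 0 0 * π j - π 0 * (P ^ i) 0 j) / ((P ^ (i - 1)) 0 0 - π 0) := by
            rw [Finset.sum_sub_distrib, ← Finset.mul_sum, ← Finset.mul_sum, hπP j, hPi j]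
    rw [hL]
    have hR : (qScal P π i • π + (1 - qScal P π i) • muRow P π (i + 1)) j =
        qScal P π i * π j + (1 - qScal P π i) *
          (((P ^ i) 0 0 * π j - π 0 * (P ^ i) 0 j) / ((P ^ i) 0 0 - π 0)) := by
      simp only [Pi.add_apply, Pi.smul_apply, smul_eq_mul, muRow_eq, Nat.add_sub_cancel]
    rw [hR]
    unfold qScal
    field_simp
    ring
  · intro hmono hgt
    unfold qScal
    have hba : (P ^ i) 0 0 ≤ (P ^ (i - 1)) 0 0 := by
      have := hmono (i - 1)
      rwa [hsub] at this
    have hap : 0 < (P ^ (i - 1)) 0 0 - π 0 := by linarith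
    constructor
    · apply div_nonneg _ (le_of_lt hap)
      linarith
    · rw [div_lt_one hap]
      linarith
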